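/- Let C ⊆ ℂⁿ be a coisotropic real subspace of real dimension n + k with respect to the standard symplectic form ω₀, and let C^{ω₀} be its symplectic orthogonal complement. Then H_C := C ∩ iC is a complex subspace of ℂⁿ (i.e., closed under multiplication by i) of complex dimension k, H_C is orthogonal to C^{ω₀} with respect to the real inner product g, H_C ∩ C^{ω₀} = {0}, and C = H_C ⊕ C^{ω₀} as an internal direct sum of real subspaces. -/

import Mathlib

noncomputable section

open scoped InnerProductSpace

/-- `ℂⁿ` regarded as a (real) inner product space: the standard symplectic form
`ω₀(x, y) = g(Jx, y) = Re⟨ix, y⟩`, where `⟨·,·⟩` is the Hermitian inner product,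
`g = Re⟨·,·⟩` and `J` is multiplication by `i`. -/
def omega0 {n : ℕ} (x y : EuclideanSpace ℂ (Fin n)) : ℝ :=
  (inner ℂ (Complex.I • x) y : ℂ).re

/-- The symplectic orthogonal complement
`C^{ω₀} = {v ∈ ℂⁿ : ω₀(v, w) = 0 for all w ∈ C}` of a real subspace `C ⊆ ℂⁿ`.
`C` is coisotropic when `symplOrth C ≤ C`. -/
def symplOrth {n : ℕ} (C : Submodule ℝ (EuclideanSpace ℂ (Fin n))) :
    Submodule ℝ (EuclideanSpace ℂ (Fin n)) where
  carrier := {v | ∀ w ∈ C, omega0 v w = 0}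
  add_mem' {a b} ha hb := fun w hw => by
    have h1 := ha w hw
    have h2 := hb w hw
    simp only [omega0, smul_add, inner_add_left, Complex.add_re] at *
    linarith
  zero_mem' := fun w hw => by simp [omega0]
  smul_mem' r v hv := fun w hw => by
    have h := hv w hw
    simp only [omega0] at *
    rw [smul_comm, RCLike.real_smul_eq_coe_smul (K := ℂ), inner_smul_real_left,
      Complex.smul_re, h, smul_zero]

/-- Multiplication by `i` on `ℂⁿ`, as a real-linear map (the standard complex
structure `J`). -/
def Jmul (n : ℕ) : EuclideanSpace ℂ (Fin n) →ₗ[ℝ] EuclideanSpace ℂ (Fin n) :=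
  LinearMap.restrictScalars ℝ (LinearMap.lsmul ℂ (EuclideanSpace ℂ (Fin n)) Complex.I)

-- auxiliary material
namespace CoisoAux

variable {n : ℕ}

lemma real_inner_eq (x y : EuclideanSpace ℂ (Fin n)) :
    ⟪x, y⟫_ℝ = (⟪x, y⟫_ℂ).re := by
  simp [PiLp.inner_apply, Complex.inner, Complex.re_sum]

lemma Jmul_apply (x : EuclideanSpace ℂ (Fin n)) : Jmul n x = Complex.I • x := rfl

def Jneg (n : ℕ) : EuclideanSpace ℂ (Fin n) →ₗ[ℝ] EuclideanSpace ℂ (Fin n) :=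
  LinearMap.restrictScalars ℝ (LinearMap.lsmul ℂ (EuclideanSpace ℂ (Fin n)) (-Complex.I))

def Jequiv (n : ℕ) : EuclideanSpace ℂ (Fin n) ≃ₗ[ℝ] EuclideanSpace ℂ (Fin n) :=
  LinearEquiv.ofLinear (Jmul n) (Jneg n)
    (by ext x; simp [Jmul, Jneg, smul_smul])
    (by ext x; simp [Jmul, Jneg, smul_smul])

lemma omega0_eq (x y : EuclideanSpace ℂ (Fin n)) : omega0 x y = ⟪Complex.I • x, y⟫_ℝ := by
  rw [real_inner_eq]; rfl

lemma finrank_ambient : Module.finrank ℝ (EuclideanSpace ℂ (Fin n)) = 2 * n := by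
  have := Module.finrank_mul_finrank ℝ ℂ (EuclideanSpace ℂ (Fin n))
  rw [Complex.finrank_real_complex, finrank_euclideanSpace_fin] at this
  omega

lemma symplOrth_eq (C : Submodule ℝ (EuclideanSpace ℂ (Fin n))) :
    symplOrth C = Cᗮ.map ((Jequiv n).symm : EuclideanSpace ℂ (Fin n) →ₗ[ℝ] EuclideanSpace ℂ (Fin n)) := by
  ext v
  simp only [Submodule.mem_map]
  constructor
  · intro hv
    refine ⟨Complex.I • v, ?_, ?_⟩
    · rw [Submodule.mem_orthogonal]
      intro w hw
      have := hv w hw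
      rw [omega0_eq, real_inner_comm] at this
      exact this
    · show (-Complex.I) • Complex.I • v = v
      simp [smul_smul]
  · rintro ⟨u, hu, rfl⟩ w hw
    rw [Submodule.mem_orthogonal] at hu
    have h := hu w hw
    rw [omega0_eq, real_inner_comm]
    have hs : Complex.I • (((Jequiv n).symm : EuclideanSpace ℂ (Fin n) →ₗ[ℝ] EuclideanSpace ℂ (Fin n)) u) = u := by
      show Complex.I • (-Complex.I) • u = u
      simp [smul_smul]
    rw [hs]
    exact h

lemma finrank_symplOrth (C : Submodule ℝ (EuclideanSpace ℂ (Fin n))) :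
    Module.finrank ℝ (symplOrth C) + Module.finrank ℝ C = 2 * n := by
  rw [symplOrth_eq, LinearEquiv.finrank_map_eq (Jequiv n).symm Cᗮ]
  have := Submodule.finrank_add_finrank_orthogonal C
  rw [finrank_ambient] at this
  omega

end CoisoAux

open CoisoAux

/-- Let `C ⊆ ℂⁿ` be a coisotropic real subspace of real dimension `n + k`
with respect to the standard symplectic form `ω₀`, and let `C^{ω₀}` be its symplectic
orthogonal complement.  Then `H_C := C ∩ iC` is a complex subspace of `ℂⁿ` (i.e.
closed under multiplication by `i`) of complex dimension `k` (real dimension `2k`),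
`H_C` is orthogonal to `C^{ω₀}` with respect to the real inner product `g = Re⟨·,·⟩`,
`H_C ∩ C^{ω₀} = {0}`, and `C = H_C ⊕ C^{ω₀}` as an internal direct sum of real
subspaces. -/
theorem coisotropic_holomorphic_splitting
    (n k : ℕ) (hk : k ≤ n)
    (C : Submodule ℝ (EuclideanSpace ℂ (Fin n)))
    (hco : symplOrth C ≤ C)
    (hdim : Module.finrank ℝ C = n + k) :
    (∀ x ∈ C ⊓ C.map (Jmul n), Complex.I • x ∈ C ⊓ C.map (Jmul n)) ∧
    Module.finrank ℝ (C ⊓ C.map (Jmul n) : Submodule ℝ (EuclideanSpace ℂ (Fin n))) = 2 * k ∧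
    (∀ x ∈ C ⊓ C.map (Jmul n), ∀ y ∈ symplOrth C, (inner ℂ x y : ℂ).re = 0) ∧
    (C ⊓ C.map (Jmul n)) ⊓ symplOrth C = ⊥ ∧
    (C ⊓ C.map (Jmul n)) ⊔ symplOrth C = C := by
  set H := C ⊓ C.map (Jmul n) with hH
  set S := symplOrth C with hSdef
  -- membership in C.map (Jmul n)
  have hmem_map : ∀ x : EuclideanSpace ℂ (Fin n), x ∈ C.map (Jmul n) ↔ (-Complex.I) • x ∈ C := by
    intro x
    constructor
    · rintro ⟨y, hy, rfl⟩
      simpa [Jmul_apply, smul_smul] using hy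
    · intro hx
      exact ⟨(-Complex.I) • x, hx, by simp [Jmul_apply, smul_smul]⟩
  -- Part 1 : closed under J
  have part1 : ∀ x ∈ H, Complex.I • x ∈ H := by
    intro x hx
    rw [hH, Submodule.mem_inf] at hx
    obtain ⟨hx1, hx2⟩ := hx
    rw [hH, Submodule.mem_inf]
    rw [hmem_map] at hx2
    constructor
    · show Complex.I • x ∈ C
      have : (-Complex.I) • x ∈ C := hx2
      have hneg : Complex.I • x = -((-Complex.I) • x) := by simp
      rw [hneg]; exact C.neg_mem this
    · rw [hmem_map]
      have h5 : (-Complex.I) • Complex.I • x = x := by simp [smul_smul]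
      simpa [h5] using hx1
  -- key inner product vanishing, in ℂ
  have hinnerC : ∀ x ∈ H, ∀ y ∈ S, (⟪y, x⟫_ℂ : ℂ) = 0 := by
    intro x hx y hy
    rw [hH, Submodule.mem_inf] at hx
    obtain ⟨hx1, hx2⟩ := hx
    rw [hmem_map] at hx2
    have h1 : omega0 y x = 0 := hy x hx1
    have h2 : omega0 y ((-Complex.I) • x) = 0 := hy _ hx2
    simp only [omega0, inner_smul_left, inner_smul_right, Complex.conj_I] at h1 h2
    set z : ℂ := ⟪y, x⟫_ℂ with hz
    have h1' : z.im = 0 := by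
      have : (-Complex.I * z).re = z.im := by simp
      rw [← this]; exact h1
    have h2' : z.re = 0 := by
      have : (-Complex.I * (-Complex.I * z)).re = -z.re := by
        rw [← mul_assoc, neg_mul_neg, Complex.I_mul_I]; simp
      have h2'' : (-Complex.I * (-Complex.I * z)).re = 0 := by
        rw [← mul_assoc] at h2 ⊢
        exact h2
      rw [this] at h2''; linarith
    exact Complex.ext h2' h1'
  -- Part 3
  have part3 : ∀ x ∈ H, ∀ y ∈ S, (⟪x, y⟫_ℂ : ℂ).re = 0 := by
    intro x hx y hy
    have := hinnerC x hx y hy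
    rw [← inner_conj_symm, this]
    simp
  -- Part 4
  have part4 : H ⊓ S = ⊥ := by
    rw [Submodule.eq_bot_iff]
    rintro x ⟨hxH, hxS⟩
    have := hinnerC x hxH x hxS
    exact inner_self_eq_zero.mp this
  -- dimension bookkeeping
  have hSdim : Module.finrank ℝ S + (n + k) = 2 * n := by
    have := finrank_symplOrth C
    rw [hdim] at this; exact this
  have hmapdim : Module.finrank ℝ (C.map (Jmul n)) = n + k := by
    have : C.map (Jmul n) = C.map ((Jequiv n : EuclideanSpace ℂ (Fin n) →ₗ[ℝ] EuclideanSpace ℂ (Fin n))) := rfl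
    rw [this, LinearEquiv.finrank_map_eq (Jequiv n) C, hdim]
  -- lower bound for finrank H
  have hsum := Submodule.finrank_sup_add_finrank_inf_eq C (C.map (Jmul n))
  rw [← hH] at hsum
  have hsup_le_top : Module.finrank ℝ ↥(C ⊔ C.map (Jmul n)) ≤ 2 * n := by
    rw [← finrank_ambient (n := n)]
    exact Submodule.finrank_le _
  -- upper bound for finrank H
  have hsum2 := Submodule.finrank_sup_add_finrank_inf_eq H S
  rw [part4, finrank_bot, add_zero] at hsum2
  have hHS_le : H ⊔ S ≤ C := by
    apply sup_le
    · exact inf_le_left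
    · exact hco
  have hHS_dim_le : Module.finrank ℝ H + Module.finrank ℝ S ≤ n + k := by
    rw [← hsum2, ← hdim]
    exact Submodule.finrank_mono hHS_le
  have part2 : Module.finrank ℝ H = 2 * k := by
    rw [hdim, hmapdim] at hsum
    omega
  refine ⟨part1, part2, part3, part4, ?_⟩
  apply Submodule.eq_of_le_of_finrank_le hHS_le
  rw [hdim, hsum2, part2]
  omega
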